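/- arXiv:1310.7995 — 3 statements merged into one kernel-verified Lean document; each statement's English description precedes it below -/
import Mathlib

section
/- If F is a subexponential distribution on (0,∞), then for every ε > 0 there exists a constant C_ε > 0 such that for all n ≥ 1 and all x ≥ 0, the tail of the n-fold convolution satisfies 1 - F^{*n}(x) ≤ C_ε (1+ε)^n (1 - F(x)). -/
open MeasureTheory Filter ProbabilityTheory

/-- The tail `1 - F(x)` of a distribution `μ` on `ℝ`. -/
noncomputable def mtail (μ : Measure ℝ) (x : ℝ) : ℝ := (μ (Set.Ioi x)).toReal

/-- The `n`-fold convolution `F^{*n}` of `μ`: the law of the sum of `n` i.i.d. copies. -/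
noncomputable def convn (μ : Measure ℝ) (n : ℕ) : Measure ℝ :=
  (Measure.pi (fun _ : Fin n => μ)).map (fun f => ∑ i, f i)

/-- `μ` is subexponential: positive tail and `(1 - F^{*2}(x))/(1 - F(x)) → 2`. -/
def Subexp (μ : Measure ℝ) : Prop :=
  (∀ x, 0 < mtail μ x) ∧
  Tendsto (fun x => mtail (convn μ 2) x / mtail μ x) atTop (nhds 2)

lemma measurable_finSum (n : ℕ) : Measurable (fun f : Fin n → ℝ => ∑ i, f i) :=
  Finset.measurable_sum _ fun i _ => measurable_pi_apply i

instance convn_isProb (μ : Measure ℝ) [IsProbabilityMeasure μ] (n : ℕ) :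
    IsProbabilityMeasure (convn μ n) := by
  rw [convn]
  exact Measure.isProbabilityMeasure_map (measurable_finSum n).aemeasurable

lemma convn_one (μ : Measure ℝ) [IsProbabilityMeasure μ] : convn μ 1 = μ := by
  have h := measurePreserving_funUnique μ (Fin 1)
  have heq : (fun f : Fin 1 → ℝ => ∑ i, f i)
      = (MeasurableEquiv.funUnique (Fin 1) ℝ : (Fin 1 → ℝ) → ℝ) := by
    funext f
    simp [MeasurableEquiv.funUnique, Fin.sum_univ_one]
  rw [convn, heq]
  exact h.map_eq

lemma convn_succ_apply (μ : Measure ℝ) [IsProbabilityMeasure μ] (n : ℕ) (x : ℝ) :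
    convn μ (n + 1) (Set.Ioi x) = ∫⁻ y, convn μ n (Set.Ioi (x - y)) ∂μ := by
  have hmp := measurePreserving_piFinSuccAbove (fun _ : Fin (n + 1) => μ) 0
  set e := MeasurableEquiv.piFinSuccAbove (fun _ : Fin (n + 1) => ℝ) 0 with he
  have hgm : Measurable (fun p : ℝ × (Fin n → ℝ) => p.1 + ∑ j, p.2 j) :=
    measurable_fst.add ((measurable_finSum n).comp measurable_snd)
  have hset : MeasurableSet {p : ℝ × (Fin n → ℝ) | x < p.1 + ∑ j, p.2 j} :=
    measurableSet_lt measurable_const hgm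
  have h1 : convn μ (n + 1) (Set.Ioi x)
      = (Measure.pi fun _ : Fin (n + 1) => μ) ((fun f => ∑ i, f i) ⁻¹' Set.Ioi x) := by
    rw [convn, Measure.map_apply (measurable_finSum _) measurableSet_Ioi]
  have hpre : ((fun f : Fin (n + 1) → ℝ => ∑ i, f i) ⁻¹' Set.Ioi x)
      = e ⁻¹' {p : ℝ × (Fin n → ℝ) | x < p.1 + ∑ j, p.2 j} := by
    ext f
    simp only [Set.mem_preimage, Set.mem_Ioi, Set.mem_setOf_eq, he,
      MeasurableEquiv.piFinSuccAbove_apply, Fin.insertNthEquiv_symm_apply, Fin.removeNth]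
    rw [Fin.sum_univ_succAbove (fun i => f i) 0]
  rw [h1, hpre, ← MeasurableEquiv.map_apply, hmp.map_eq, Measure.prod_apply hset]
  refine lintegral_congr fun y => ?_
  rw [convn, Measure.map_apply (measurable_finSum n) measurableSet_Ioi]
  congr 1
  ext g
  simp only [Set.mem_preimage, Set.mem_setOf_eq, Set.mem_Ioi]
  constructor <;> intro h <;> linarith

lemma Ioi_full (μ : Measure ℝ) [IsProbabilityMeasure μ] (hpos : μ (Set.Iic 0) = 0)
    {z : ℝ} (hz : z ≤ 0) : μ (Set.Ioi z) = 1 := by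
  have h := measure_add_measure_compl (μ := μ) (measurableSet_Iic (a := (0:ℝ)))
  rw [hpos, zero_add, Set.compl_Iic, measure_univ] at h
  exact le_antisymm prob_le_one (h ▸ measure_mono (Set.Ioi_subset_Ioi hz))

/-- Kesten's bound: if `F` is a subexponential distribution on `(0,∞)`, then for every
`ε > 0` there is `C_ε > 0` with `1 - F^{*n}(x) ≤ C_ε (1+ε)^n (1 - F(x))` for all
`n ≥ 1` and `x ≥ 0`. -/
theorem kesten_bound (μ : Measure ℝ) [IsProbabilityMeasure μ]
    (hpos : μ (Set.Iic 0) = 0) (hsub : Subexp μ) :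
    ∀ ε > (0 : ℝ), ∃ C > (0 : ℝ), ∀ n : ℕ, 1 ≤ n → ∀ x : ℝ, 0 ≤ x →
      mtail (convn μ n) x ≤ C * (1 + ε) ^ n * mtail μ x := by
  intro ε hε
  obtain ⟨hposT, htend⟩ := hsub
  have h2 : (2 : ℝ) < 2 + ε := by linarith
  obtain ⟨T₀, hT₀⟩ := eventually_atTop.1 (htend.eventually_lt_const h2)
  set T : ℝ := max T₀ 0 with hTdef
  have hT2 : ∀ x, T ≤ x → mtail (convn μ 2) x ≤ (2 + ε) * mtail μ x := by
    intro x hx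
    have h := hT₀ x (le_trans (le_max_left _ _) hx)
    have hp := hposT x
    rw [div_lt_iff₀ hp] at h
    linarith
  set t : ℝ := mtail μ T with ht
  have htpos : 0 < t := hposT T
  set D : ℝ := max (1 / t) 1 with hD
  have hD1 : (1 : ℝ) ≤ D := le_max_right _ _
  have hDt : 1 / t ≤ D := le_max_left _ _
  set γ : ℕ → ℝ := fun n => (D / ε + 1) * (1 + ε) ^ n - D / ε with hγ
  have hγsucc : ∀ n, γ (n + 1) = D + (1 + ε) * γ n := by
    intro n
    simp only [hγ, pow_succ]
    field_simp
    ring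
  have hγ1 : γ 1 = D + 1 + ε := by
    simp only [hγ, pow_one]
    field_simp
    ring
  have hγge1 : ∀ n, 1 ≤ n → 1 ≤ γ n := by
    intro n hn
    induction n, hn using Nat.le_induction with
    | base => rw [hγ1]; linarith
    | succ n hn ih => rw [hγsucc]; nlinarith
  have hμIoiT : μ (Set.Ioi T) = ENNReal.ofReal t := (ENNReal.ofReal_toReal (measure_ne_top _ _)).symm
  -- main claim in ℝ≥0∞
  have main : ∀ n, 1 ≤ n → ∀ x : ℝ, 0 ≤ x →
      convn μ n (Set.Ioi x) ≤ ENNReal.ofReal (γ n) * μ (Set.Ioi x) := by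
    intro n hn
    induction n, hn using Nat.le_induction with
    | base =>
      intro x hx
      rw [convn_one μ]
      calc μ (Set.Ioi x) = 1 * μ (Set.Ioi x) := (one_mul _).symm
        _ ≤ ENNReal.ofReal (γ 1) * μ (Set.Ioi x) := by
            gcongr
            rw [← ENNReal.ofReal_one]
            exact ENNReal.ofReal_le_ofReal (hγge1 1 le_rfl)
    | succ n hn ih =>
      intro x hx
      have hγn1 : 1 ≤ γ n := hγge1 n hn
      rcases le_or_gt T x with hxT | hxT
      · -- large x
        have hrestr : μ.restrict (Set.Iic x) = μ.restrict (Set.Ioc 0 x) := by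
          refine Measure.restrict_congr_set ?_
          rw [MeasureTheory.ae_eq_set]
          constructor
          · refine measure_mono_null (fun y hy => ?_) hpos
            simp only [Set.mem_diff, Set.mem_Iic, Set.mem_Ioc, not_and] at hy ⊢
            by_contra hc
            push_neg at hc
            exact hy.2 hc hy.1
          · have : Set.Ioc 0 x \ Set.Iic x = ∅ := by
              ext y
              simp only [Set.mem_diff, Set.mem_Ioc, Set.mem_Iic, Set.mem_empty_iff_false,
                iff_false, not_and]
              tauto
            rw [this, measure_empty]
        -- key identity for convn μ 2
        have h2eq : convn μ 2 (Set.Ioi x)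
            = (∫⁻ y in Set.Ioc 0 x, μ (Set.Ioi (x - y)) ∂μ) + μ (Set.Ioi x) := by
          have hfm : Measurable fun y => μ (Set.Ioi (x - y)) :=
            Monotone.measurable fun a b hab =>
              measure_mono (Set.Ioi_subset_Ioi (by linarith))
          rw [show (2 : ℕ) = 1 + 1 from rfl, convn_succ_apply μ 1 x, convn_one μ,
            ← lintegral_add_compl (fun y => μ (Set.Ioi (x - y))) (measurableSet_Iic (a := x)),
            Set.compl_Iic, hrestr]
          congr 1
          rw [show (∫⁻ y in Set.Ioi x, μ (Set.Ioi (x - y)) ∂μ) = ∫⁻ _ in Set.Ioi x, 1 ∂μ from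
            setLIntegral_congr_fun measurableSet_Ioi (fun y hy =>
              Ioi_full μ hpos (by simp only [Set.mem_Ioi] at hy; linarith)),
            setLIntegral_one]
        have h2le : convn μ 2 (Set.Ioi x) ≤ ENNReal.ofReal (2 + ε) * μ (Set.Ioi x) := by
          have := hT2 x hxT
          calc convn μ 2 (Set.Ioi x) = ENNReal.ofReal (mtail (convn μ 2) x) :=
                (ENNReal.ofReal_toReal (measure_ne_top _ _)).symm
            _ ≤ ENNReal.ofReal ((2 + ε) * mtail μ x) := ENNReal.ofReal_le_ofReal this
            _ = ENNReal.ofReal (2 + ε) * μ (Set.Ioi x) := by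
                rw [ENNReal.ofReal_mul (by linarith), mtail,
                  ENNReal.ofReal_toReal (measure_ne_top _ _)]
        have hcancel : (∫⁻ y in Set.Ioc 0 x, μ (Set.Ioi (x - y)) ∂μ)
            ≤ ENNReal.ofReal (1 + ε) * μ (Set.Ioi x) := by
          have h' : (∫⁻ y in Set.Ioc 0 x, μ (Set.Ioi (x - y)) ∂μ) + μ (Set.Ioi x)
              ≤ ENNReal.ofReal (1 + ε) * μ (Set.Ioi x) + μ (Set.Ioi x) := by
            rw [← h2eq]
            refine h2le.trans (le_of_eq ?_)
            rw [show (2 : ℝ) + ε = (1 + ε) + 1 by ring,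
              ENNReal.ofReal_add (by linarith) zero_le_one, ENNReal.ofReal_one, add_mul, one_mul]
          exact (ENNReal.add_le_add_iff_right (measure_ne_top _ _)).1 h'
        -- now the (n+1)-fold tail
        have hnm : Measurable fun y => convn μ n (Set.Ioi (x - y)) :=
          Monotone.measurable fun a b hab =>
            measure_mono (Set.Ioi_subset_Ioi (by linarith))
        rw [convn_succ_apply μ n x,
          ← lintegral_add_compl (fun y => convn μ n (Set.Ioi (x - y))) (measurableSet_Iic (a := x)),
          Set.compl_Iic, hrestr]
        have hb1 : (∫⁻ y in Set.Ioi x, convn μ n (Set.Ioi (x - y)) ∂μ) ≤ μ (Set.Ioi x) := by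
          calc (∫⁻ y in Set.Ioi x, convn μ n (Set.Ioi (x - y)) ∂μ)
              ≤ ∫⁻ _ in Set.Ioi x, 1 ∂μ := lintegral_mono fun y => prob_le_one
            _ = μ (Set.Ioi x) := setLIntegral_one _
        have hb2 : (∫⁻ y in Set.Ioc 0 x, convn μ n (Set.Ioi (x - y)) ∂μ)
            ≤ ENNReal.ofReal (γ n) * ENNReal.ofReal (1 + ε) * μ (Set.Ioi x) := by
          calc (∫⁻ y in Set.Ioc 0 x, convn μ n (Set.Ioi (x - y)) ∂μ)
              ≤ ∫⁻ y in Set.Ioc 0 x, ENNReal.ofReal (γ n) * μ (Set.Ioi (x - y)) ∂μ := by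
                refine setLIntegral_mono
                  (Measurable.const_mul (Monotone.measurable fun a b hab =>
                    measure_mono (Set.Ioi_subset_Ioi (by linarith))) _) fun y hy => ?_
                exact ih (x - y) (by simp only [Set.mem_Ioc] at hy; linarith [hy.2])
            _ = ENNReal.ofReal (γ n) * ∫⁻ y in Set.Ioc 0 x, μ (Set.Ioi (x - y)) ∂μ :=
                lintegral_const_mul _ (Monotone.measurable fun a b hab =>
                  measure_mono (Set.Ioi_subset_Ioi (by linarith)))
            _ ≤ ENNReal.ofReal (γ n) * (ENNReal.ofReal (1 + ε) * μ (Set.Ioi x)) := by gcongr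
            _ = ENNReal.ofReal (γ n) * ENNReal.ofReal (1 + ε) * μ (Set.Ioi x) := by ring
        calc (∫⁻ y in Set.Ioc 0 x, convn μ n (Set.Ioi (x - y)) ∂μ)
              + ∫⁻ y in Set.Ioi x, convn μ n (Set.Ioi (x - y)) ∂μ
            ≤ ENNReal.ofReal (γ n) * ENNReal.ofReal (1 + ε) * μ (Set.Ioi x) + μ (Set.Ioi x) :=
              add_le_add hb2 hb1
          _ = (ENNReal.ofReal (γ n * (1 + ε)) + 1) * μ (Set.Ioi x) := by
              rw [ENNReal.ofReal_mul (by linarith), add_mul, one_mul]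
          _ ≤ ENNReal.ofReal (γ (n + 1)) * μ (Set.Ioi x) := by
              gcongr
              rw [hγsucc n, ← ENNReal.ofReal_one, ← ENNReal.ofReal_add (by nlinarith) zero_le_one]
              exact ENNReal.ofReal_le_ofReal (by nlinarith)
      · -- small x : 0 ≤ x < T
        have hprod : (0 : ℝ) < (1 + ε) * γ n := mul_pos (by linarith) (by linarith)
        have hγs1 : (1 : ℝ) ≤ γ (n + 1) := hγge1 (n + 1) (by omega)
        have hγD : 1 / t ≤ γ (n + 1) := by
          rw [hγsucc]
          exact le_trans hDt (le_add_of_nonneg_right hprod.le)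
        calc convn μ (n + 1) (Set.Ioi x) ≤ 1 := prob_le_one
          _ ≤ ENNReal.ofReal (γ (n + 1)) * μ (Set.Ioi T) := by
              rw [hμIoiT, ← ENNReal.ofReal_mul (by linarith), ← ENNReal.ofReal_one]
              refine ENNReal.ofReal_le_ofReal ?_
              rw [div_le_iff₀ htpos] at hγD
              linarith
          _ ≤ ENNReal.ofReal (γ (n + 1)) * μ (Set.Ioi x) :=
              mul_le_mul_right (measure_mono (Set.Ioi_subset_Ioi hxT.le)) _
  have hC0 : (0 : ℝ) < D / ε + 1 := by
    have : 0 ≤ D / ε := div_nonneg (by linarith) hε.le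
    linarith
  refine ⟨D / ε + 1, hC0, ?_⟩
  intro n hn x hx
  have h := main n hn x hx
  have hγn0 : 0 ≤ γ n := le_trans zero_le_one (hγge1 n hn)
  calc mtail (convn μ n) x = (convn μ n (Set.Ioi x)).toReal := rfl
    _ ≤ (ENNReal.ofReal (γ n) * μ (Set.Ioi x)).toReal := by
        refine ENNReal.toReal_mono ?_ h
        exact ENNReal.mul_ne_top ENNReal.ofReal_ne_top (measure_ne_top _ _)
    _ = γ n * mtail μ x := by
        rw [ENNReal.toReal_mul, ENNReal.toReal_ofReal hγn0]; rfl
    _ ≤ (D / ε + 1) * (1 + ε) ^ n * mtail μ x := by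
        have hle : γ n ≤ (D / ε + 1) * (1 + ε) ^ n := by
          have : 0 ≤ D / ε := div_nonneg (by linarith) hε.le
          simp only [hγ]; linarith
        exact mul_le_mul_of_nonneg_right hle ENNReal.toReal_nonneg
end

section
/- For a standard one-dimensional Brownian motion B, for every t ≥ 0 and x > 0, P(inf_{0≤s≤t} B(s) < -x) = P(sup_{0≤s≤t} B(s) > x) = 2 P(B(t) > x). -/
open MeasureTheory Filter ProbabilityTheory Topology
open scoped NNReal ENNReal

variable {Ω : Type*} [MeasurableSpace Ω]

/-- `B` is a standard one-dimensional Brownian motion (on `[0,∞)`) under `P`. -/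
structure IsStdBM (P : Measure Ω) (B : ℝ → Ω → ℝ) : Prop where
  meas : ∀ t, Measurable (B t)
  init : ∀ᵐ ω ∂P, B 0 ω = 0
  cont : ∀ᵐ ω ∂P, Continuous fun t => B t ω
  incr : ∀ s t : ℝ, 0 ≤ s → s ≤ t →
    P.map (fun ω => B t ω - B s ω) = gaussianReal 0 (Real.toNNReal (t - s))
  indep : ∀ (n : ℕ) (t : Fin (n + 1) → ℝ), Monotone t → 0 ≤ t 0 →
    iIndepFun
      (fun i : Fin n => fun ω => B (t i.succ) ω - B (t i.castSucc) ω) P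


lemma gauss_neg (v : ℝ≥0) :
    (gaussianReal 0 v).map (fun y : ℝ => -y) = gaussianReal 0 v := by
  have h := gaussianReal_map_const_mul (μ := 0) (v := v) (-1)
  have h1 : (fun y : ℝ => -y) = ((-1 : ℝ) * ·) := by ext y; ring
  rw [h1, h]
  congr 1
  · ring
  · ext
    push_cast
    norm_num

lemma gauss_symm (v : ℝ≥0) (s : Set ℝ) (hs : MeasurableSet s) :
    gaussianReal 0 v ((fun y : ℝ => -y) ⁻¹' s) = gaussianReal 0 v s := by
  conv_rhs => rw [← gauss_neg v]
  rw [Measure.map_apply measurable_neg hs]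

lemma gauss_Iio_neg (v : ℝ≥0) (δ : ℝ) :
    gaussianReal 0 v (Set.Iio (-δ)) = gaussianReal 0 v (Set.Ioi δ) := by
  rw [← gauss_symm v (Set.Iio (-δ)) measurableSet_Iio]
  congr 1
  ext y
  simp [neg_lt]

lemma gauss_singleton {v : ℝ≥0} (hv : v ≠ 0) (a : ℝ) : gaussianReal 0 v {a} = 0 :=
  gaussianReal_absolutelyContinuous (0 : ℝ) hv (measure_singleton a)


section Grid

variable {P : Measure Ω} [IsProbabilityMeasure P] {B : ℝ → Ω → ℝ}

lemma grid_bounds (hB : IsStdBM P B) (n : ℕ) (u : ℕ → ℝ) (hu0 : u 0 = 0)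
    (humono : Monotone u) (x δ : ℝ) (hx : 0 < x) (hδ : 0 < δ) :
    P {ω | ∃ k ≤ n, x < B (u k) ω - B 0 ω}
        ≤ P {ω | x - δ < B (u n) ω - B 0 ω} + P {ω | x + δ < B (u n) ω - B 0 ω} ∧
    P {ω | x < B (u n) ω - B 0 ω} + P {ω | x + 2*δ < B (u n) ω - B 0 ω}
        ≤ P {ω | ∃ k ≤ n, x < B (u k) ω - B 0 ω}
          + 2 * P {ω | ∃ i < n, δ < |B (u (i+1)) ω - B (u i) ω|} := by
  classical
  set S : ℕ → Ω → ℝ := fun k ω => B (u k) ω - B 0 ω with hSdef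
  set f : ℕ → Ω → ℝ := fun i ω => B (u (i+1)) ω - B (u i) ω with hfdef
  have hSmeas : ∀ k, Measurable (S k) := fun k => (hB.meas _).sub (hB.meas 0)
  have hfmeas : ∀ i, Measurable (f i) := fun i => (hB.meas _).sub (hB.meas _)
  have hS0 : ∀ ω, S 0 ω = 0 := by intro ω; simp [hSdef, hu0]
  have hSsum : ∀ k ω, S k ω = ∑ i ∈ Finset.range k, f i ω := by
    intro k ω
    have h := Finset.sum_range_sub (f := fun i => B (u i) ω) k
    simp only [hSdef, hfdef]
    rw [h, hu0]
  have hDS : ∀ k ω, B (u n) ω - B (u k) ω = S n ω - S k ω := by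
    intro k ω; simp only [hSdef]; ring
  set A : ℕ → Set Ω := fun k => {ω | x < S k ω ∧ ∀ j < k, S j ω ≤ x} with hAdef
  have hAmeas : ∀ k, MeasurableSet (A k) := by
    intro k
    have h : A k = {ω | x < S k ω} ∩ ⋂ j, ⋂ (_ : j < k), {ω | S j ω ≤ x} := by
      ext ω; simp [hAdef]
    rw [h]
    exact (measurableSet_lt measurable_const (hSmeas k)).inter
      (MeasurableSet.iInter fun j => MeasurableSet.iInter fun _ =>
        measurableSet_le (hSmeas j) measurable_const)
  have hd : ∀ {k k' : ℕ}, k < k' → Disjoint (A k) (A k') := by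
    intro k k' h
    rw [Set.disjoint_left]
    rintro ω ⟨h1, _⟩ ⟨_, h2⟩
    exact absurd h1 (not_lt.2 (h2 k h))
  have hpd : ((Finset.range (n+1) : Finset ℕ) : Set ℕ).PairwiseDisjoint A := by
    intro a _ b _ hab
    rcases lt_or_gt_of_ne hab with h | h
    · exact hd h
    · exact (hd h).symm
  have hMev : {ω | ∃ k ≤ n, x < S k ω} = ⋃ k ∈ Finset.range (n+1), A k := by
    ext ω
    simp only [Set.mem_setOf_eq, Set.mem_iUnion, Finset.mem_range, Nat.lt_succ_iff, hAdef]
    constructor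
    · rintro ⟨k, hk, hxk⟩
      have hpe : ∃ j, x < S j ω := ⟨k, hxk⟩
      exact ⟨Nat.find hpe, le_trans (Nat.find_min' hpe hxk) hk,
        Nat.find_spec hpe, fun j hj => not_lt.1 (Nat.find_min hpe hj)⟩
    · rintro ⟨k, hk, h1, _⟩
      exact ⟨k, hk, h1⟩
  have hindep : iIndepFun (fun i : Fin n => f (i : ℕ)) P := by
    have hmono : Monotone (fun i : Fin (n+1) => u i) := by
      intro i j hij
      exact humono (by exact_mod_cast hij)
    have h0 : (0:ℝ) ≤ (fun i : Fin (n+1) => u i) 0 := by simp [hu0]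
    have h := hB.indep n (fun i : Fin (n+1) => u i) hmono h0
    have he : (fun i : Fin n => fun ω => B ((fun i : Fin (n+1) => u i) i.succ) ω
        - B ((fun i : Fin (n+1) => u i) i.castSucc) ω) = fun i : Fin n => f (i : ℕ) := by
      funext i
      simp only [hfdef, Fin.val_succ, Fin.coe_castSucc]
    rwa [he] at h
  have hkey : ∀ k, k ≤ n → ∀ (c : Set ℝ), MeasurableSet c →
      P (A k ∩ (fun ω => B (u n) ω - B (u k) ω) ⁻¹' c)
        = P (A k) * P ((fun ω => B (u n) ω - B (u k) ω) ⁻¹' c) := by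
    intro k hk c hc
    set Sk : Finset (Fin n) := Finset.univ.filter (fun i => (i : ℕ) < k) with hSkdef
    set Tk : Finset (Fin n) := Finset.univ.filter (fun i => k ≤ (i : ℕ)) with hTkdef
    have hST : Disjoint Sk Tk := by
      rw [Finset.disjoint_left]
      intro i hi hi'
      simp only [hSkdef, hTkdef, Finset.mem_filter] at hi hi'
      omega
    have hIF := hindep.indepFun_finset Sk Tk hST (fun i => hfmeas (i : ℕ))
    set FS : ℕ → (Sk → ℝ) → ℝ := fun j v => ∑ i : Sk, if ((i : Fin n) : ℕ) < j then v i else 0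
      with hFSdef
    have hFSmeas : ∀ j, Measurable (FS j) := by
      intro j
      apply Finset.measurable_sum
      intro i _
      by_cases h : ((i : Fin n) : ℕ) < j
      · simpa [h] using measurable_pi_apply i
      · simpa [h] using measurable_const
    have hFSeq : ∀ j, j ≤ k → ∀ ω, FS j (fun i : Sk => f ((i : Fin n) : ℕ) ω) = S j ω := by
      intro j hj ω
      have c1 : FS j (fun i : Sk => f ((i : Fin n) : ℕ) ω)
          = ∑ i ∈ Sk, (if (i : ℕ) < j then f (i : ℕ) ω else 0) := by
        rw [hFSdef]
        exact Finset.sum_coe_sort Sk (fun i : Fin n => if (i : ℕ) < j then f (i : ℕ) ω else 0)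
      have c2 : ∑ i ∈ Sk, (if (i : ℕ) < j then f (i : ℕ) ω else 0)
          = ∑ i : Fin n, (if (i : ℕ) < j then f (i : ℕ) ω else 0) := by
        apply Finset.sum_subset (Finset.subset_univ _)
        intro i _ hi
        simp only [hSkdef, Finset.mem_filter, Finset.mem_univ, true_and, not_lt] at hi
        have : ¬ ((i : ℕ) < j) := by omega
        simp [this]
      have c3 : ∑ i : Fin n, (if (i : ℕ) < j then f (i : ℕ) ω else 0)
          = ∑ i ∈ Finset.range n, (if i < j then f i ω else 0) :=
        Fin.sum_univ_eq_sum_range (fun i => if i < j then f i ω else 0) n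
      have c4 : ∑ i ∈ Finset.range n, (if i < j then f i ω else 0)
          = ∑ i ∈ Finset.range j, f i ω := by
        rw [← Finset.sum_filter]
        congr 1
        ext i
        simp only [Finset.mem_filter, Finset.mem_range]
        omega
      rw [c1, c2, c3, c4, ← hSsum]
    have hTsum : ∀ ω, (∑ i : Tk, f ((i : Fin n) : ℕ) ω) = B (u n) ω - B (u k) ω := by
      intro ω
      have c1 : (∑ i : Tk, f ((i : Fin n) : ℕ) ω) = ∑ i ∈ Tk, f (i : ℕ) ω :=
        Finset.sum_coe_sort Tk (fun i : Fin n => f (i : ℕ) ω)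
      have c2 : ∑ i ∈ Tk, f (i : ℕ) ω
          = ∑ i : Fin n, (if k ≤ (i : ℕ) then f (i : ℕ) ω else 0) := by
        rw [hTkdef, Finset.sum_filter]
      have c3 : ∑ i : Fin n, (if k ≤ (i : ℕ) then f (i : ℕ) ω else 0)
          = ∑ i ∈ Finset.range n, (if k ≤ i then f i ω else 0) :=
        Fin.sum_univ_eq_sum_range (fun i => if k ≤ i then f i ω else 0) n
      have c4 : ∑ i ∈ Finset.range n, (if k ≤ i then f i ω else 0)
          = ∑ i ∈ Finset.range n \ Finset.range k, f i ω := by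
        rw [← Finset.sum_filter]
        congr 1
        ext i
        simp only [Finset.mem_filter, Finset.mem_range, Finset.mem_sdiff]
        omega
      have c5 : ∑ i ∈ Finset.range n \ Finset.range k, f i ω
          = ∑ i ∈ Finset.range n, f i ω - ∑ i ∈ Finset.range k, f i ω :=
        Finset.sum_sdiff_eq_sub (Finset.range_subset_range.2 hk)
      rw [c1, c2, c3, c4, c5, ← hSsum, ← hSsum, hDS]
    have hAk : A k = (fun ω (i : Sk) => f ((i : Fin n) : ℕ) ω) ⁻¹'
        {v : Sk → ℝ | x < FS k v ∧ ∀ j < k, FS j v ≤ x} := by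
      ext ω
      simp only [hAdef, Set.mem_setOf_eq, Set.mem_preimage]
      constructor
      · rintro ⟨h1, h2⟩
        refine ⟨by rw [hFSeq k le_rfl]; exact h1, fun j hj => ?_⟩
        rw [hFSeq j hj.le]; exact h2 j hj
      · rintro ⟨h1, h2⟩
        rw [hFSeq k le_rfl] at h1
        refine ⟨h1, fun j hj => ?_⟩
        have := h2 j hj
        rwa [hFSeq j hj.le] at this
    have hCA : MeasurableSet {v : Sk → ℝ | x < FS k v ∧ ∀ j < k, FS j v ≤ x} := by
      have h : {v : Sk → ℝ | x < FS k v ∧ ∀ j < k, FS j v ≤ x}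
          = {v | x < FS k v} ∩ ⋂ j, ⋂ (_ : j < k), {v | FS j v ≤ x} := by
        ext v; simp
      rw [h]
      exact (measurableSet_lt measurable_const (hFSmeas k)).inter
        (MeasurableSet.iInter fun j => MeasurableSet.iInter fun _ =>
          measurableSet_le (hFSmeas j) measurable_const)
    have hψ : (fun ω => B (u n) ω - B (u k) ω) ⁻¹' c
        = (fun ω (i : Tk) => f ((i : Fin n) : ℕ) ω) ⁻¹'
          ((fun v : Tk → ℝ => ∑ i, v i) ⁻¹' c) := by
      ext ω
      simp only [Set.mem_preimage]
      rw [hTsum ω]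
    have hsum_meas : Measurable (fun v : Tk → ℝ => ∑ i, v i) :=
      Finset.measurable_sum _ (fun i _ => measurable_pi_apply i)
    rw [hAk, hψ]
    exact hIF.measure_inter_preimage_eq_mul _ _ hCA (hsum_meas hc)
  have hDlaw : ∀ k, k ≤ n → ∀ (c : Set ℝ), MeasurableSet c →
      P ((fun ω => B (u n) ω - B (u k) ω) ⁻¹' c)
        = gaussianReal 0 (Real.toNNReal (u n - u k)) c := by
    intro k hk c hc
    have h0k : (0:ℝ) ≤ u k := hu0 ▸ humono (Nat.zero_le k)
    rw [← hB.incr (u k) (u n) h0k (humono hk),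
      Measure.map_apply (f := fun ω => B (u n) ω - B (u k) ω) ((hB.meas _).sub (hB.meas _)) hc]
  have hrefl : ∀ k, k ≤ n →
      P (A k ∩ {ω | B (u n) ω - B (u k) ω < -δ})
        = P (A k ∩ {ω | δ < B (u n) ω - B (u k) ω}) := by
    intro k hk
    have h1 : {ω | B (u n) ω - B (u k) ω < -δ}
        = (fun ω => B (u n) ω - B (u k) ω) ⁻¹' (Set.Iio (-δ)) := rfl
    have h2 : {ω | δ < B (u n) ω - B (u k) ω}
        = (fun ω => B (u n) ω - B (u k) ω) ⁻¹' (Set.Ioi δ) := rfl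
    rw [h1, h2, hkey k hk _ measurableSet_Iio, hkey k hk _ measurableSet_Ioi,
      hDlaw k hk _ measurableSet_Iio, hDlaw k hk _ measurableSet_Ioi, gauss_Iio_neg]
  have hsum_le : ∀ (T : ℕ → Set Ω), (∀ k, MeasurableSet (T k)) → ∀ (Y : Set Ω),
      (∀ k ∈ Finset.range (n+1), A k ∩ T k ⊆ Y) →
      ∑ k ∈ Finset.range (n+1), P (A k ∩ T k) ≤ P Y := by
    intro T hT Y hY
    rw [← measure_biUnion_finset (hpd.mono fun k => Set.inter_subset_left)
      (fun k _ => (hAmeas k).inter (hT k))]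
    exact measure_mono (Set.iUnion₂_subset hY)
  have hMevP : P {ω | ∃ k ≤ n, x < S k ω} = ∑ k ∈ Finset.range (n+1), P (A k) := by
    rw [hMev, measure_biUnion_finset hpd (fun k _ => hAmeas k)]
  constructor
  · -- upper bound
    have step1 : ∀ k ∈ Finset.range (n+1), P (A k) ≤
        P (A k ∩ {ω | x - δ < S n ω}) + P (A k ∩ {ω | δ < B (u n) ω - B (u k) ω}) := by
      intro k hkm
      have hk : k ≤ n := Nat.lt_succ_iff.1 (Finset.mem_range.1 hkm)
      rw [← hrefl k hk]
      refine le_trans (measure_mono ?_) (measure_union_le _ _)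
      intro ω hω
      by_cases hcase : x - δ < S n ω
      · exact Or.inl ⟨hω, hcase⟩
      · refine Or.inr ⟨hω, ?_⟩
        have h1 : x < S k ω := hω.1
        have h2 : S n ω ≤ x - δ := not_lt.1 hcase
        show B (u n) ω - B (u k) ω < -δ
        rw [hDS k ω]
        linarith
    calc P {ω | ∃ k ≤ n, x < S k ω} = ∑ k ∈ Finset.range (n+1), P (A k) := hMevP
      _ ≤ ∑ k ∈ Finset.range (n+1), (P (A k ∩ {ω | x - δ < S n ω})
            + P (A k ∩ {ω | δ < B (u n) ω - B (u k) ω})) := Finset.sum_le_sum step1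
      _ = ∑ k ∈ Finset.range (n+1), P (A k ∩ {ω | x - δ < S n ω})
            + ∑ k ∈ Finset.range (n+1), P (A k ∩ {ω | δ < B (u n) ω - B (u k) ω}) :=
          Finset.sum_add_distrib
      _ ≤ P {ω | x - δ < S n ω} + P {ω | x + δ < S n ω} := by
          refine add_le_add (hsum_le _ (fun k => measurableSet_lt measurable_const (hSmeas n)) _
            (fun k _ => Set.inter_subset_right)) (hsum_le _
            (fun k => measurableSet_lt measurable_const ((hB.meas _).sub (hB.meas _))) _ ?_)
          rintro k hkm ω ⟨⟨h1, _⟩, h2⟩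
          have h2' : δ < S n ω - S k ω := by rw [← hDS k ω]; exact h2
          show x + δ < S n ω
          linarith
  · -- lower bound
    set E : Set Ω := {ω | ∃ i < n, δ < |f i ω|} with hEdef
    have hEmeas : MeasurableSet E := by
      have h : E = ⋃ i, ⋃ (_ : i < n), {ω | δ < |f i ω|} := by ext ω; simp [hEdef]
      rw [h]
      exact MeasurableSet.iUnion fun i => MeasurableSet.iUnion fun _ =>
        measurableSet_lt measurable_const (hfmeas i).abs
    have hSk_le : ∀ k ω, 0 < k → k ≤ n → ω ∉ E → (∀ j < k, S j ω ≤ x) → S k ω ≤ x + δ := by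
      intro k ω hkpos hkn hE hmin
      have h1 : S (k-1) ω ≤ x := hmin _ (Nat.sub_lt hkpos one_pos)
      have hk' : k = (k-1) + 1 := (Nat.succ_pred_eq_of_pos hkpos).symm
      have h2 : S k ω = S (k-1) ω + f (k-1) ω := by
        calc S k ω = ∑ i ∈ Finset.range ((k-1)+1), f i ω := by rw [← hk', hSsum]
          _ = ∑ i ∈ Finset.range (k-1), f i ω + f (k-1) ω := Finset.sum_range_succ _ _
          _ = S (k-1) ω + f (k-1) ω := by rw [← hSsum]
      have h3 : |f (k-1) ω| ≤ δ := by
        by_contra h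
        exact hE ⟨k-1, by omega, not_le.1 h⟩
      have h4 := le_abs_self (f (k-1) ω)
      linarith
    have l1 : P {ω | x < S n ω} ≤ ∑ k ∈ Finset.range (n+1), P (A k ∩ {ω | x < S n ω}) := by
      refine le_trans (measure_mono ?_) (measure_biUnion_finset_le _ _)
      intro ω hω
      have hm : ω ∈ {ω | ∃ k ≤ n, x < S k ω} := ⟨n, le_rfl, hω⟩
      rw [hMev] at hm
      simp only [Set.mem_iUnion] at hm ⊢
      obtain ⟨k, hk, hAk⟩ := hm
      exact ⟨k, hk, hAk, hω⟩
    have l2 : P {ω | x + 2*δ < S n ω} ≤ P E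
        + ∑ k ∈ Finset.range (n+1), P (A k ∩ {ω | δ < B (u n) ω - B (u k) ω}) := by
      have hsub2 : {ω | x + 2*δ < S n ω} ⊆ E ∪ ⋃ k ∈ Finset.range (n+1),
          (A k ∩ {ω | δ < B (u n) ω - B (u k) ω}) := by
        intro ω hω
        have hω' : x + 2*δ < S n ω := hω
        by_cases hE : ω ∈ E
        · exact Or.inl hE
        right
        have hex : ∃ j, x < S j ω := ⟨n, by linarith⟩
        set k := Nat.find hex with hkdef
        have hk1 : x < S k ω := Nat.find_spec hex
        have hkmin : ∀ j < k, S j ω ≤ x := fun j hj => not_lt.1 (Nat.find_min hex hj)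
        have hkn : k ≤ n := Nat.find_min' hex (by linarith)
        have hkpos : 0 < k := by
          rcases Nat.eq_zero_or_pos k with h0 | h
          · exfalso; rw [h0] at hk1; rw [hS0] at hk1; linarith
          · exact h
        have hb : S k ω ≤ x + δ := hSk_le k ω hkpos hkn hE hkmin
        refine Set.mem_iUnion₂.2 ⟨k, Finset.mem_range.2 (Nat.lt_succ_of_le hkn),
          ⟨hk1, hkmin⟩, ?_⟩
        show δ < B (u n) ω - B (u k) ω
        rw [hDS k ω]
        linarith
      refine le_trans (measure_mono hsub2) (le_trans (measure_union_le _ _) ?_)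
      gcongr
      exact measure_biUnion_finset_le _ _
    have l3 : ∀ k ∈ Finset.range (n+1), P (A k ∩ {ω | δ < B (u n) ω - B (u k) ω})
        ≤ P (A k ∩ {ω | S n ω ≤ x}) + P (A k ∩ E) := by
      intro k hkm
      have hk : k ≤ n := Nat.lt_succ_iff.1 (Finset.mem_range.1 hkm)
      rw [← hrefl k hk]
      refine le_trans (measure_mono ?_) (measure_union_le _ _)
      rintro ω ⟨hA, hD⟩
      by_cases hE : ω ∈ E
      · exact Or.inr ⟨hA, hE⟩
      left
      refine ⟨hA, ?_⟩
      obtain ⟨hk1, hkmin⟩ := hA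
      have hkpos : 0 < k := by
        rcases Nat.eq_zero_or_pos k with h0 | h
        · exfalso; rw [h0] at hk1; rw [hS0] at hk1; linarith
        · exact h
      have hb : S k ω ≤ x + δ := hSk_le k ω hkpos hk hE hkmin
      have hD' : S n ω - S k ω < -δ := by rw [← hDS k ω]; exact hD
      show S n ω ≤ x
      linarith
    have l4 : ∑ k ∈ Finset.range (n+1), P (A k ∩ E) ≤ P E :=
      hsum_le (fun _ => E) (fun _ => hEmeas) E (fun k _ => Set.inter_subset_right)
    have l5 : ∀ k, P (A k ∩ {ω | x < S n ω}) + P (A k ∩ {ω | S n ω ≤ x}) = P (A k) := by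
      intro k
      have h : A k ∩ {ω | S n ω ≤ x} = A k \ {ω | x < S n ω} := by
        ext ω
        simp only [Set.mem_inter_iff, Set.mem_setOf_eq, Set.mem_diff, not_lt]
      rw [h, measure_inter_add_diff _ (measurableSet_lt measurable_const (hSmeas n))]
    calc P {ω | x < S n ω} + P {ω | x + 2*δ < S n ω}
        ≤ (∑ k ∈ Finset.range (n+1), P (A k ∩ {ω | x < S n ω}))
          + (P E + ∑ k ∈ Finset.range (n+1), P (A k ∩ {ω | δ < B (u n) ω - B (u k) ω})) :=
          add_le_add l1 l2
      _ ≤ (∑ k ∈ Finset.range (n+1), P (A k ∩ {ω | x < S n ω}))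
          + (P E + ∑ k ∈ Finset.range (n+1), (P (A k ∩ {ω | S n ω ≤ x}) + P (A k ∩ E))) := by
          exact add_le_add le_rfl (add_le_add le_rfl (Finset.sum_le_sum l3))
      _ = (∑ k ∈ Finset.range (n+1), (P (A k ∩ {ω | x < S n ω}) + P (A k ∩ {ω | S n ω ≤ x})))
          + (∑ k ∈ Finset.range (n+1), P (A k ∩ E) + P E) := by
          rw [Finset.sum_add_distrib, Finset.sum_add_distrib]
          ring
      _ ≤ (∑ k ∈ Finset.range (n+1), P (A k)) + (P E + P E) := by
          refine add_le_add (le_of_eq (Finset.sum_congr rfl fun k _ => l5 k)) ?_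
          gcongr
      _ = P {ω | ∃ k ≤ n, x < S k ω} + 2 * P E := by
          rw [hMevP, two_mul]

lemma sup_law (hB : IsStdBM P B) {t : ℝ} (ht : 0 < t) {x : ℝ} (hx : 0 < x) :
    P {ω | x < ⨆ s : Set.Icc (0:ℝ) t, B s ω} = 2 * P {ω | x < B t ω} := by
  classical
  set u : ℕ → ℕ → ℝ := fun m k => (k : ℝ) * t / 2^m with hudef
  have hu0 : ∀ m, u m 0 = 0 := by intro m; simp [hudef]
  have humono : ∀ m, Monotone (u m) := by
    intro m k k' h
    simp only [hudef]
    have hk : (k:ℝ) ≤ (k':ℝ) := by exact_mod_cast h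
    have h2 : (0:ℝ) < 2^m := by positivity
    rw [div_le_div_iff₀ h2 h2]
    nlinarith [mul_le_mul_of_nonneg_right (mul_le_mul_of_nonneg_right hk ht.le) h2.le]
  have hut : ∀ m, u m (2^m) = t := by
    intro m
    simp only [hudef]
    push_cast
    rw [mul_comm, mul_div_assoc, div_self (by positivity : (2:ℝ)^m ≠ 0), mul_one]
  have humem : ∀ m k, k ≤ 2^m → u m k ∈ Set.Icc (0:ℝ) t := by
    intro m k hk
    have hk' : (k:ℝ) ≤ 2^m := by
      have : ((k:ℕ):ℝ) ≤ ((2^m : ℕ):ℝ) := by exact_mod_cast hk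
      push_cast at this
      exact this
    constructor
    · simp only [hudef]; positivity
    · simp only [hudef]
      rw [div_le_iff₀ (by positivity : (0:ℝ) < 2^m)]
      nlinarith [(by positivity : (0:ℝ) < (2:ℝ)^m)]
  set Mev : ℕ → Set Ω := fun m => {ω | ∃ k ≤ 2^m, x < B (u m k) ω - B 0 ω} with hMevdef
  have hMono : Monotone Mev := by
    apply monotone_nat_of_le_succ
    intro m ω hω
    simp only [hMevdef, Set.mem_setOf_eq] at hω ⊢
    obtain ⟨k, hk, hxk⟩ := hω
    refine ⟨2*k, by rw [pow_succ]; omega, ?_⟩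
    have he : u (m+1) (2*k) = u m k := by
      simp only [hudef]
      push_cast
      rw [pow_succ]
      field_simp
    rwa [he]
  have hUnionAE : {ω | x < ⨆ s : Set.Icc (0:ℝ) t, B s ω} =ᵐ[P] ⋃ m, Mev m := by
    rw [Filter.eventuallyEq_set]
    filter_upwards [hB.cont, hB.init] with ω hc h0
    constructor
    · intro hsup
      have hne : Nonempty (Set.Icc (0:ℝ) t) := ⟨⟨0, le_rfl, ht.le⟩⟩
      obtain ⟨s, hs⟩ := exists_lt_of_lt_ciSup hsup
      have hU : IsOpen ((fun r => B r ω) ⁻¹' Set.Ioi x) := isOpen_Ioi.preimage hc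
      have hsU : (s:ℝ) ∈ (fun r => B r ω) ⁻¹' Set.Ioi x := hs
      obtain ⟨ε, hε, hball⟩ := Metric.isOpen_iff.1 hU (s:ℝ) hsU
      obtain ⟨m, hm⟩ := exists_pow_lt_of_lt_one (div_pos hε ht) (by norm_num : (2⁻¹:ℝ) < 1)
      have hmesh : t / 2^m < ε := by
        have h' : t * (2⁻¹:ℝ)^m < t * (ε/t) := by
          exact mul_lt_mul_of_pos_left hm ht
        calc t / 2^m = t * (2⁻¹:ℝ)^m := by rw [inv_pow, div_eq_mul_inv]
          _ < t * (ε/t) := h'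
          _ = ε := by field_simp
      set y : ℝ := (s:ℝ) * 2^m / t with hydef
      have hy0 : 0 ≤ y := by
        have hs1 := s.2.1
        positivity
      set k := ⌊y⌋₊ with hkdef
      have hky : (k:ℝ) ≤ y := Nat.floor_le hy0
      have hyk : y < k + 1 := Nat.lt_floor_add_one y
      have hk2m : k ≤ 2^m := by
        have hy2 : y ≤ (2^m : ℝ) := by
          rw [hydef, div_le_iff₀ ht]
          nlinarith [s.2.2, (by positivity : (0:ℝ) < (2:ℝ)^m)]
        have h2 : (k:ℝ) ≤ ((2^m : ℕ) : ℝ) := by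
          push_cast
          exact le_trans hky hy2
        exact_mod_cast h2
      have hsy : (s:ℝ) = y * t / 2^m := by
        rw [hydef]
        field_simp
      have habs : |u m k - (s:ℝ)| ≤ t / 2^m := by
        have he : u m k - (s:ℝ) = ((k:ℝ) - y) * (t / 2^m) := by
          simp only [hudef]
          rw [hsy]
          ring
        rw [he, abs_mul, abs_of_nonneg (by positivity : (0:ℝ) ≤ t/2^m)]
        have h1 : |(k:ℝ) - y| ≤ 1 := abs_le.2 ⟨by linarith, by linarith⟩
        nlinarith [abs_nonneg ((k:ℝ) - y), (by positivity : (0:ℝ) ≤ t/2^m)]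
      have hmem2 := hball (show u m k ∈ Metric.ball (s:ℝ) ε by
        rw [Metric.mem_ball, Real.dist_eq]; linarith)
      rw [Set.mem_iUnion]
      refine ⟨m, ?_⟩
      simp only [hMevdef, Set.mem_setOf_eq]
      exact ⟨k, hk2m, by rw [h0, sub_zero]; exact hmem2⟩
    · intro hm
      rw [Set.mem_iUnion] at hm
      obtain ⟨m, hm'⟩ := hm
      simp only [hMevdef, Set.mem_setOf_eq] at hm'
      obtain ⟨k, hk, hxk⟩ := hm'
      rw [h0, sub_zero] at hxk
      have hbdd : BddAbove (Set.range fun s : Set.Icc (0:ℝ) t => B s ω) := by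
        have h1 : BddAbove ((fun r => B r ω) '' Set.Icc 0 t) :=
          (isCompact_Icc.image_of_continuousOn hc.continuousOn).bddAbove
        rwa [Set.image_eq_range] at h1
      exact lt_of_lt_of_le hxk (le_ciSup hbdd ⟨u m k, humem m k hk⟩)
  have hEmeas : ∀ (m : ℕ) (δ:ℝ), MeasurableSet {ω | ∃ i < 2^m, δ < |B (u m (i+1)) ω - B (u m i) ω|} := by
    intro m δ
    have h : {ω | ∃ i < 2^m, δ < |B (u m (i+1)) ω - B (u m i) ω|}
        = ⋃ i, ⋃ (_ : i < 2^m), {ω | δ < |B (u m (i+1)) ω - B (u m i) ω|} := by ext ω; simp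
    rw [h]
    exact MeasurableSet.iUnion fun i => MeasurableSet.iUnion fun _ =>
      measurableSet_lt measurable_const ((hB.meas _).sub (hB.meas _)).abs
  have hE0 : ∀ δ : ℝ, 0 < δ →
      Tendsto (fun m => P {ω | ∃ i < 2^m, δ < |B (u m (i+1)) ω - B (u m i) ω|}) atTop (𝓝 0) := by
    intro δ hδ
    have hlim : ∀ᵐ ω ∂P, Tendsto (fun m => Set.indicator
        {ω' | ∃ i < 2^m, δ < |B (u m (i+1)) ω' - B (u m i) ω'|} (fun _ => (1:ℝ≥0∞)) ω)
        atTop (𝓝 0) := by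
      filter_upwards [hB.cont] with ω hc
      have huc := isCompact_Icc.uniformContinuousOn_of_continuous
        (s := Set.Icc (0:ℝ) t) hc.continuousOn
      rw [Metric.uniformContinuousOn_iff] at huc
      obtain ⟨η, hη, hball⟩ := huc δ hδ
      obtain ⟨m₀, hm₀⟩ := exists_pow_lt_of_lt_one (div_pos hη ht) (by norm_num : (2⁻¹:ℝ) < 1)
      have hmesh : ∀ m, m₀ ≤ m → t / 2^m < η := by
        intro m hmm
        have h1 : ((2:ℝ)⁻¹)^m ≤ ((2:ℝ)⁻¹)^m₀ :=
          pow_le_pow_of_le_one (by norm_num) (by norm_num) hmm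
        have h' : t * (2⁻¹:ℝ)^m < t * (η/t) := by
          apply mul_lt_mul_of_pos_left _ ht
          exact lt_of_le_of_lt h1 hm₀
        calc t / 2^m = t * (2⁻¹:ℝ)^m := by rw [inv_pow, div_eq_mul_inv]
          _ < t * (η/t) := h'
          _ = η := by field_simp
      have hev : (fun m => Set.indicator
          {ω' | ∃ i < 2^m, δ < |B (u m (i+1)) ω' - B (u m i) ω'|} (fun _ => (1:ℝ≥0∞)) ω)
          =ᶠ[atTop] (fun _ => (0:ℝ≥0∞)) := by
        filter_upwards [eventually_ge_atTop m₀] with m hmm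
        apply Set.indicator_of_notMem
        rintro ⟨i, hi, habs⟩
        have h1 : u m i ∈ Set.Icc (0:ℝ) t := humem m i (le_of_lt hi)
        have h2 : u m (i+1) ∈ Set.Icc (0:ℝ) t := humem m (i+1) hi
        have hd : dist (u m (i+1)) (u m i) < η := by
          rw [Real.dist_eq]
          have he : u m (i+1) - u m i = t / 2^m := by
            simp only [hudef]
            push_cast
            ring
          rw [he, abs_of_nonneg (by positivity)]
          exact hmesh m hmm
        have hcon := hball _ h2 _ h1 hd
        rw [Real.dist_eq] at hcon
        linarith
      exact Tendsto.congr' hev.symm tendsto_const_nhds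
    have heq : (fun m => P {ω | ∃ i < 2^m, δ < |B (u m (i+1)) ω - B (u m i) ω|})
        = fun m => ∫⁻ ω, Set.indicator
          {ω' | ∃ i < 2^m, δ < |B (u m (i+1)) ω' - B (u m i) ω'|} (fun _ => (1:ℝ≥0∞)) ω ∂P := by
      funext m
      exact (lintegral_indicator_one (hEmeas m δ)).symm
    rw [heq, show (0:ℝ≥0∞) = ∫⁻ _, (0:ℝ≥0∞) ∂P by simp]
    apply tendsto_lintegral_of_dominated_convergence (bound := fun _ => (1:ℝ≥0∞))
    · exact fun m => measurable_const.indicator (hEmeas m δ)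
    · refine fun m => Filter.Eventually.of_forall fun ω => ?_
      by_cases h : ω ∈ {ω' | ∃ i < 2^m, δ < |B (u m (i+1)) ω' - B (u m i) ω'|}
      · simp [Set.indicator_of_mem h]
      · simp [Set.indicator_of_notMem h]
    · simp
    · exact hlim
  have hνdef : P.map (fun ω => B t ω - B 0 ω) = gaussianReal 0 t.toNNReal := by
    have h := hB.incr 0 t le_rfl ht.le
    rwa [sub_zero] at h
  have hq : ∀ y : ℝ, P {ω | y < B t ω - B 0 ω} = gaussianReal 0 t.toNNReal (Set.Ioi y) := by
    intro y
    rw [← hνdef, Measure.map_apply (f := fun ω => B t ω - B 0 ω) ((hB.meas t).sub (hB.meas 0)) measurableSet_Ioi]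
    rfl
  have hGB : ∀ (m : ℕ) (δ:ℝ), 0 < δ →
      (P (Mev m) ≤ P {ω | x - δ < B t ω - B 0 ω} + P {ω | x + δ < B t ω - B 0 ω} ∧
       P {ω | x < B t ω - B 0 ω} + P {ω | x + 2*δ < B t ω - B 0 ω}
         ≤ P (Mev m) + 2 * P {ω | ∃ i < 2^m, δ < |B (u m (i+1)) ω - B (u m i) ω|}) := by
    intro m δ hδ
    have h := grid_bounds hB (2^m) (u m) (hu0 m) (humono m) x δ hx hδ
    rw [hut m] at h
    exact h
  set L := ⨆ m, P (Mev m) with hL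
  have hPsup : P {ω | x < ⨆ s : Set.Icc (0:ℝ) t, B s ω} = L := by
    rw [measure_congr hUnionAE, hMono.measure_iUnion]
  have hup : ∀ δ : ℝ, 0 < δ →
      L ≤ gaussianReal 0 t.toNNReal (Set.Ioi (x - δ)) + gaussianReal 0 t.toNNReal (Set.Ioi x) := by
    intro δ hδ
    refine iSup_le fun m => le_trans ((hGB m δ hδ).1) ?_
    rw [hq, hq]
    exact add_le_add le_rfl (measure_mono (Set.Ioi_subset_Ioi (by linarith)))
  have hvne : t.toNNReal ≠ 0 := fun h => absurd (Real.toNNReal_eq_zero.1 h) (not_le.2 ht)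
  have hIci : gaussianReal 0 t.toNNReal (Set.Ici x) = gaussianReal 0 t.toNNReal (Set.Ioi x) := by
    refine le_antisymm ?_ (measure_mono Set.Ioi_subset_Ici_self)
    have hsplit : Set.Ici x ⊆ Set.Ioi x ∪ {x} := by
      intro z hz
      rcases eq_or_lt_of_le (Set.mem_Ici.1 hz) with h | h
      · exact Or.inr (by simp [h.symm])
      · exact Or.inl h
    calc gaussianReal 0 t.toNNReal (Set.Ici x)
        ≤ gaussianReal 0 t.toNNReal (Set.Ioi x ∪ {x}) := measure_mono hsplit
      _ ≤ gaussianReal 0 t.toNNReal (Set.Ioi x) + gaussianReal 0 t.toNNReal {x} :=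
          measure_union_le _ _
      _ = gaussianReal 0 t.toNNReal (Set.Ioi x) := by rw [gauss_singleton hvne x, add_zero]
  have hupper : L ≤ 2 * gaussianReal 0 t.toNNReal (Set.Ioi x) := by
    have hseq : ∀ j : ℕ, L ≤ gaussianReal 0 t.toNNReal (Set.Ioi (x - 1/(j+1)))
        + gaussianReal 0 t.toNNReal (Set.Ioi x) :=
      fun j => hup (1/(j+1)) (by positivity)
    have hsetanti : Antitone (fun j : ℕ => Set.Ioi (x - 1/((j:ℝ)+1))) := by
      intro j j' h
      apply Set.Ioi_subset_Ioi
      have h1 : (1:ℝ)/(j'+1) ≤ 1/(j+1) := by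
        apply one_div_le_one_div_of_le (by positivity)
        have : (j:ℝ) ≤ j' := by exact_mod_cast h
        linarith
      linarith
    have hiInter : ⋂ j : ℕ, Set.Ioi (x - 1/((j:ℝ)+1)) = Set.Ici x := by
      ext z
      simp only [Set.mem_iInter, Set.mem_Ioi, Set.mem_Ici]
      constructor
      · intro h
        by_contra hzx
        push_neg at hzx
        obtain ⟨j, hj⟩ := exists_nat_one_div_lt (by linarith : (0:ℝ) < x - z)
        have h2 := h j
        linarith
      · intro h j
        have : (0:ℝ) < 1/((j:ℝ)+1) := by positivity
        linarith
    have hiInf : ⨅ j : ℕ, gaussianReal 0 t.toNNReal (Set.Ioi (x - 1/((j:ℝ)+1)))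
        = gaussianReal 0 t.toNNReal (Set.Ici x) := by
      rw [← hiInter]
      exact (Antitone.measure_iInter hsetanti
        (fun j => measurableSet_Ioi.nullMeasurableSet) ⟨0, measure_ne_top _ _⟩).symm
    have hanti : Antitone (fun j : ℕ => gaussianReal 0 t.toNNReal (Set.Ioi (x - 1/((j:ℝ)+1)))) :=
      fun j j' h => measure_mono (hsetanti h)
    have htlim : Tendsto (fun j : ℕ => gaussianReal 0 t.toNNReal (Set.Ioi (x - 1/((j:ℝ)+1)))
        + gaussianReal 0 t.toNNReal (Set.Ioi x)) atTop
        (𝓝 (gaussianReal 0 t.toNNReal (Set.Ici x) + gaussianReal 0 t.toNNReal (Set.Ioi x))) := by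
      rw [← hiInf]
      exact (tendsto_atTop_iInf hanti).add tendsto_const_nhds
    have hfin := ge_of_tendsto' htlim hseq
    calc L ≤ gaussianReal 0 t.toNNReal (Set.Ici x) + gaussianReal 0 t.toNNReal (Set.Ioi x) := hfin
      _ = 2 * gaussianReal 0 t.toNNReal (Set.Ioi x) := by rw [hIci, two_mul]
  have hlow : ∀ δ : ℝ, 0 < δ →
      gaussianReal 0 t.toNNReal (Set.Ioi x) + gaussianReal 0 t.toNNReal (Set.Ioi (x + 2*δ)) ≤ L := by
    intro δ hδ
    have h1 : ∀ m, gaussianReal 0 t.toNNReal (Set.Ioi x)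
        + gaussianReal 0 t.toNNReal (Set.Ioi (x + 2*δ))
        ≤ L + 2 * P {ω | ∃ i < 2^m, δ < |B (u m (i+1)) ω - B (u m i) ω|} := by
      intro m
      have h := (hGB m δ hδ).2
      rw [hq, hq] at h
      exact le_trans h (add_le_add (le_iSup (fun m => P (Mev m)) m) le_rfl)
    have h2 : Tendsto (fun m => L + 2 * P {ω | ∃ i < 2^m, δ < |B (u m (i+1)) ω - B (u m i) ω|})
        atTop (𝓝 (L + 2*0)) :=
      Tendsto.add tendsto_const_nhds (ENNReal.Tendsto.const_mul (hE0 δ hδ) (Or.inr (by norm_num)))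
    have h3 := ge_of_tendsto' h2 h1
    simpa using h3
  have hlower : 2 * gaussianReal 0 t.toNNReal (Set.Ioi x) ≤ L := by
    have hseq : ∀ j : ℕ, gaussianReal 0 t.toNNReal (Set.Ioi x)
        + gaussianReal 0 t.toNNReal (Set.Ioi (x + 2*(1/(j+1)))) ≤ L :=
      fun j => hlow (1/(j+1)) (by positivity)
    have hsetmono : Monotone (fun j : ℕ => Set.Ioi (x + 2*(1/((j:ℝ)+1)))) := by
      intro j j' h
      apply Set.Ioi_subset_Ioi
      have h1 : (1:ℝ)/(j'+1) ≤ 1/(j+1) := by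
        apply one_div_le_one_div_of_le (by positivity)
        have : (j:ℝ) ≤ j' := by exact_mod_cast h
        linarith
      linarith
    have hiUnion : ⋃ j : ℕ, Set.Ioi (x + 2*(1/((j:ℝ)+1))) = Set.Ioi x := by
      ext z
      simp only [Set.mem_iUnion, Set.mem_Ioi]
      constructor
      · rintro ⟨j, hj⟩
        have : (0:ℝ) < 1/((j:ℝ)+1) := by positivity
        linarith
      · intro h
        obtain ⟨j, hj⟩ := exists_nat_one_div_lt (by linarith : (0:ℝ) < (z - x)/2)
        exact ⟨j, by linarith⟩
    have hiSup : ⨆ j : ℕ, gaussianReal 0 t.toNNReal (Set.Ioi (x + 2*(1/((j:ℝ)+1))))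
        = gaussianReal 0 t.toNNReal (Set.Ioi x) := by
      rw [← hiUnion]
      exact (Monotone.measure_iUnion hsetmono).symm
    have hmono2 : Monotone (fun j : ℕ => gaussianReal 0 t.toNNReal (Set.Ioi (x + 2*(1/((j:ℝ)+1))))) :=
      fun j j' h => measure_mono (hsetmono h)
    have htlim : Tendsto (fun j : ℕ => gaussianReal 0 t.toNNReal (Set.Ioi x)
        + gaussianReal 0 t.toNNReal (Set.Ioi (x + 2*(1/((j:ℝ)+1))))) atTop
        (𝓝 (gaussianReal 0 t.toNNReal (Set.Ioi x) + gaussianReal 0 t.toNNReal (Set.Ioi x))) := by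
      have h4 := tendsto_atTop_iSup hmono2
      rw [hiSup] at h4
      exact Tendsto.add tendsto_const_nhds h4
    exact le_trans (le_of_eq (two_mul _)) (le_of_tendsto' htlim hseq)
  have hBt : P {ω | x < B t ω} = gaussianReal 0 t.toNNReal (Set.Ioi x) := by
    rw [← hq x]
    apply measure_congr
    rw [Filter.eventuallyEq_set]
    filter_upwards [hB.init] with ω h0
    rw [h0, sub_zero]
  rw [hPsup, hBt]
  exact le_antisymm hupper hlower

lemma IsStdBM.neg (hB : IsStdBM P B) : IsStdBM P (fun s ω => - B s ω) := by
  constructor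
  · exact fun s => (hB.meas s).neg
  · filter_upwards [hB.init] with ω h; simp [h]
  · filter_upwards [hB.cont] with ω h; exact h.neg
  · intro s v hs hsv
    have h : (fun ω => (-B v ω) - (-B s ω)) = (fun y : ℝ => -y) ∘ (fun ω => B v ω - B s ω) := by
      funext ω; simp; ring
    rw [h, ← Measure.map_map (g := fun y : ℝ => -y) (f := fun ω => B v ω - B s ω) measurable_neg ((hB.meas _).sub (hB.meas _)),
      hB.incr s v hs hsv, gauss_neg]
  · intro n ts hmono h0
    have h := hB.indep n ts hmono h0
    have h2 := h.comp (g := fun _ => fun y : ℝ => -y) (fun i => measurable_neg)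
    have he : (fun i : Fin n => (fun y : ℝ => -y) ∘ fun ω => B (ts i.succ) ω - B (ts i.castSucc) ω)
        = fun i : Fin n => fun ω => (-B (ts i.succ) ω) - (-B (ts i.castSucc) ω) := by
      funext i ω
      simp [Function.comp]
      ring
    rwa [he] at h2

lemma real_iInf_neg {ι : Sort*} (g : ι → ℝ) : ⨅ i, g i = - ⨆ i, - g i := by
  rw [iInf, iSup, Real.sInf_def]
  congr 2
  ext y
  simp only [Set.mem_neg, Set.mem_range]
  constructor
  · rintro ⟨i, hi⟩
    exact ⟨i, by linarith⟩
  · rintro ⟨i, hi⟩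
    exact ⟨i, by linarith⟩

/-- Reflection principle: for a standard Brownian motion `B`, every `t ≥ 0` and `x > 0`,
`P(inf_{0≤s≤t} B(s) < -x) = P(sup_{0≤s≤t} B(s) > x) = 2 P(B(t) > x)`. -/
theorem reflection_principle (P : Measure Ω) [IsProbabilityMeasure P]
    (B : ℝ → Ω → ℝ) (hB : IsStdBM P B) (t : ℝ) (ht : 0 ≤ t) (x : ℝ) (hx : 0 < x) :
    P {ω | (⨅ s : Set.Icc (0 : ℝ) t, B s ω) < -x}
      = P {ω | x < (⨆ s : Set.Icc (0 : ℝ) t, B s ω)} ∧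
    P {ω | x < (⨆ s : Set.Icc (0 : ℝ) t, B s ω)} = 2 * P {ω | x < B t ω} := by
  rcases eq_or_lt_of_le ht with h0 | htpos
  · -- t = 0
    subst h0
    have hinst : Unique (Set.Icc (0:ℝ) (0:ℝ)) := by
      rw [Set.Icc_self]
      infer_instance
    have hsupz : ∀ (g : ℝ → Ω → ℝ) (ω : Ω), (⨆ s : Set.Icc (0:ℝ) 0, g s ω) = g 0 ω := by
      intro g ω
      have h := ciSup_unique (ι := Set.Icc (0:ℝ) (0:ℝ)) (s := fun s => g s ω)
      rw [h]
      have hd : ((default : Set.Icc (0:ℝ) (0:ℝ)) : ℝ) = 0 := by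
        have := (default : Set.Icc (0:ℝ) (0:ℝ)).2
        have h1 := this.1
        have h2 := this.2
        linarith
      rw [hd]
    have hinfz : ∀ (g : ℝ → Ω → ℝ) (ω : Ω), (⨅ s : Set.Icc (0:ℝ) 0, g s ω) = g 0 ω := by
      intro g ω
      have h := ciInf_unique (ι := Set.Icc (0:ℝ) (0:ℝ)) (s := fun s => g s ω)
      rw [h]
      have hd : ((default : Set.Icc (0:ℝ) (0:ℝ)) : ℝ) = 0 := by
        have := (default : Set.Icc (0:ℝ) (0:ℝ)).2
        have h1 := this.1
        have h2 := this.2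
        linarith
      rw [hd]
    have e1 : P {ω | (⨅ s : Set.Icc (0 : ℝ) 0, B s ω) < -x} = 0 := by
      have he : {ω | (⨅ s : Set.Icc (0 : ℝ) 0, B s ω) < -x} =ᵐ[P] (∅ : Set Ω) := by
        rw [Filter.eventuallyEq_set]
        filter_upwards [hB.init] with ω hω
        simp only [Set.mem_setOf_eq, Set.mem_empty_iff_false, iff_false, not_lt]
        rw [hinfz B ω, hω]
        linarith
      rw [measure_congr he, measure_empty]
    have e2 : P {ω | x < (⨆ s : Set.Icc (0 : ℝ) 0, B s ω)} = 0 := by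
      have he : {ω | x < (⨆ s : Set.Icc (0 : ℝ) 0, B s ω)} =ᵐ[P] (∅ : Set Ω) := by
        rw [Filter.eventuallyEq_set]
        filter_upwards [hB.init] with ω hω
        simp only [Set.mem_setOf_eq, Set.mem_empty_iff_false, iff_false, not_lt]
        rw [hsupz B ω, hω]
        linarith
      rw [measure_congr he, measure_empty]
    have e3 : P {ω | x < B 0 ω} = 0 := by
      have he : {ω | x < B 0 ω} =ᵐ[P] (∅ : Set Ω) := by
        rw [Filter.eventuallyEq_set]
        filter_upwards [hB.init] with ω hω
        simp only [Set.mem_setOf_eq, Set.mem_empty_iff_false, iff_false, not_lt]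
        rw [hω]
        linarith
      rw [measure_congr he, measure_empty]
    rw [e1, e2, e3]
    simp
  · -- t > 0
    have hBneg := hB.neg
    have hsupN := sup_law hBneg htpos hx
    have hsupB := sup_law hB htpos hx
    have hset1 : {ω | (⨅ s : Set.Icc (0 : ℝ) t, B s ω) < -x}
        = {ω | x < (⨆ s : Set.Icc (0 : ℝ) t, - B s ω)} := by
      ext ω
      simp only [Set.mem_setOf_eq]
      rw [real_iInf_neg (fun s : Set.Icc (0:ℝ) t => B s ω)]
      exact neg_lt_neg_iff
    have hsym : P {ω | B t ω < -x} = P {ω | x < B t ω} := by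
      have ha : {ω | B t ω < -x} =ᵐ[P] {ω | B t ω - B 0 ω < -x} := by
        rw [Filter.eventuallyEq_set]
        filter_upwards [hB.init] with ω hω
        simp only [Set.mem_setOf_eq, hω, sub_zero]
      have hb : {ω | x < B t ω} =ᵐ[P] {ω | x < B t ω - B 0 ω} := by
        rw [Filter.eventuallyEq_set]
        filter_upwards [hB.init] with ω hω
        simp only [Set.mem_setOf_eq, hω, sub_zero]
      rw [measure_congr ha, measure_congr hb]
      have hmap := hB.incr 0 t le_rfl htpos.le
      rw [sub_zero] at hmap
      have h1 : P {ω | B t ω - B 0 ω < -x} = gaussianReal 0 t.toNNReal (Set.Iio (-x)) := by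
        rw [← hmap, Measure.map_apply (f := fun ω => B t ω - B 0 ω) ((hB.meas t).sub (hB.meas 0)) measurableSet_Iio]
        rfl
      have h2 : P {ω | x < B t ω - B 0 ω} = gaussianReal 0 t.toNNReal (Set.Ioi x) := by
        rw [← hmap, Measure.map_apply (f := fun ω => B t ω - B 0 ω) ((hB.meas t).sub (hB.meas 0)) measurableSet_Ioi]
        rfl
      rw [h1, h2, gauss_Iio_neg]
    have hnegset : {ω | x < - B t ω} = {ω | B t ω < -x} := by
      ext ω
      simp only [Set.mem_setOf_eq]
      exact lt_neg
    constructor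
    · rw [hset1]
      calc P {ω | x < (⨆ s : Set.Icc (0 : ℝ) t, - B s ω)}
          = 2 * P {ω | x < - B t ω} := hsupN
        _ = 2 * P {ω | B t ω < -x} := by rw [hnegset]
        _ = 2 * P {ω | x < B t ω} := by rw [hsym]
        _ = P {ω | x < (⨆ s : Set.Icc (0 : ℝ) t, B s ω)} := hsupB.symm
    · exact hsupB

end Grid
end

section
/- Let X and Y be independent random variables with distributions F_X and F_Y, where Y is nonnegative and not degenerate at 0. Then the following are equivalent: (i) the distribution of X - Y is long-tailed; (ii) F_X is long-tailed; (iii) P(X - Y > x) ∼ P(X > x) as x → ∞. -/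
open MeasureTheory Filter ProbabilityTheory

/-- `μ` is long-tailed: positive tail and `(1 - F(x - t))/(1 - F(x)) → 1` for all `t > 0`. -/
def LongTailed (μ : Measure ℝ) : Prop :=
  (∀ x, 0 < mtail μ x) ∧
  ∀ t : ℝ, 0 < t → Tendsto (fun x => mtail μ (x - t) / mtail μ x) atTop (nhds 1)

private lemma tendsto_one_of_eps (f : ℝ → ℝ)
    (hub : ∀ᶠ x in atTop, f x ≤ 1)
    (hlb : ∀ ε : ℝ, 0 < ε → ∀ᶠ x in atTop, 1 - ε ≤ f x) :
    Tendsto f atTop (nhds 1) := by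
  rw [Metric.tendsto_atTop]
  intro ε hε
  have h := (hlb (ε / 2) (by linarith)).and hub
  rw [eventually_atTop] at h
  obtain ⟨N, hN⟩ := h
  refine ⟨N, fun n hn => ?_⟩
  have h1 := hN n hn
  rw [Real.dist_eq, abs_lt]
  constructor <;> [linarith [h1.1]; linarith [h1.2]]

private lemma aux_ext (G : ℝ → ℝ) (hA : Antitone G) (hpos : ∀ x, 0 < G x)
    (δ : ℝ) (hδ : 0 < δ)
    (h : Tendsto (fun x => G (x - δ) / G x) atTop (nhds 1)) :
    ∀ t : ℝ, 0 < t → Tendsto (fun x => G (x - t) / G x) atTop (nhds 1) := by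
  have hn : ∀ n : ℕ, Tendsto (fun x => G (x - n * δ) / G x) atTop (nhds 1) := by
    intro n
    induction n with
    | zero =>
      refine tendsto_const_nhds.congr fun x => ?_
      simp [div_self (hpos x).ne']
    | succ n ih =>
      have hsh : Tendsto (fun x : ℝ => x - δ) atTop atTop := by
        simpa [sub_eq_add_neg] using tendsto_atTop_add_const_right atTop (-δ) tendsto_id
      have h1 : Tendsto (fun x => G (x - δ - n * δ) / G (x - δ)) atTop (nhds 1) := ih.comp hsh
      have h2 := h1.mul h
      rw [mul_one] at h2
      refine h2.congr fun x => ?_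
      have he : x - ((n + 1 : ℕ) : ℝ) * δ = x - δ - n * δ := by push_cast; ring
      rw [he]
      exact div_mul_div_cancel₀ (hpos (x - δ)).ne'
  intro t ht
  obtain ⟨n, hnn⟩ := exists_nat_ge (t / δ)
  have htn : t ≤ n * δ := by
    rw [div_le_iff₀ hδ] at hnn
    linarith
  refine tendsto_of_tendsto_of_tendsto_of_le_of_le tendsto_const_nhds (hn n)
    (fun x => ?_) (fun x => ?_)
  · rw [le_div_iff₀ (hpos x), one_mul]
    exact hA (by linarith)
  · exact (div_le_div_iff_of_pos_right (hpos x)).mpr (hA (by linarith : x - n * δ ≤ x - t))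

private lemma core (G H c : ℝ → ℝ) (δ0 q : ℝ)
    (hGanti : Antitone G)
    (hGnn : ∀ x, 0 ≤ G x) (hHnn : ∀ x, 0 ≤ H x)
    (hHG : ∀ x, H x ≤ G x)
    (hcnn : ∀ t, 0 ≤ c t) (hcle1 : ∀ t, c t ≤ 1)
    (hGH : ∀ t x, G x * c t ≤ H (x - t))
    (hc1 : ∀ ε : ℝ, 0 < ε → ∃ t, 0 < t ∧ 1 - ε < c t)
    (hδ0 : 0 < δ0) (hqpos : 0 < q)
    (hsplit : ∀ x, H x ≤ G (x + δ0) * q + G x * (1 - q)) :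
    (((∀ x, 0 < H x) ∧ ∀ t : ℝ, 0 < t →
        Tendsto (fun x => H (x - t) / H x) atTop (nhds 1)) ↔
      ((∀ x, 0 < G x) ∧ ∀ t : ℝ, 0 < t →
        Tendsto (fun x => G (x - t) / G x) atTop (nhds 1))) ∧
    (((∀ x, 0 < G x) ∧ ∀ t : ℝ, 0 < t →
        Tendsto (fun x => G (x - t) / G x) atTop (nhds 1)) ↔
      Tendsto (fun x => H x / G x) atTop (nhds 1)) := by
  -- flip a ratio limit
  have hflip : ∀ (F K : ℝ → ℝ), Tendsto (fun x => F x / K x) atTop (nhds 1) →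
      Tendsto (fun x => K x / F x) atTop (nhds 1) := by
    intro F K h
    have h1 := h.inv₀ one_ne_zero
    rw [inv_one] at h1
    exact h1.congr fun x => inv_div _ _
  have hplusG : ∀ (F : ℝ → ℝ) (t : ℝ),
      Tendsto (fun x => F (x - t) / F x) atTop (nhds 1) →
      Tendsto (fun x => F (x + t) / F x) atTop (nhds 1) := by
    intro F t h
    have h2 : Tendsto (fun x => F x / F (x - t)) atTop (nhds 1) := hflip _ _ h
    have hsh : Tendsto (fun x : ℝ => x + t) atTop atTop :=
      tendsto_atTop_add_const_right atTop t tendsto_id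
    have h3 := h2.comp hsh
    exact h3.congr fun x => by
      simp only [Function.comp_apply, add_sub_cancel_right]
  -- (ii) → (iii)
  have P1 : ((∀ x, 0 < G x) ∧ ∀ t : ℝ, 0 < t →
      Tendsto (fun x => G (x - t) / G x) atTop (nhds 1)) →
      Tendsto (fun x => H x / G x) atTop (nhds 1) := by
    rintro ⟨hGpos, hGt⟩
    apply tendsto_one_of_eps
    · exact Eventually.of_forall fun x => div_le_one_of_le₀ (hHG x) (hGnn x)
    · intro ε hε
      obtain ⟨t, ht, hct⟩ := hc1 (ε / 2) (by linarith)
      have hplus := hplusG G t (hGt t ht)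
      have hev := Filter.Tendsto.eventually_const_le (by linarith : 1 - ε / 2 < 1) hplus
      filter_upwards [hev] with x hx
      have hGx := hGpos x
      have h1 : G (x + t) * c t ≤ H x := by
        have h0 := hGH t (x + t)
        rwa [add_sub_cancel_right] at h0
      rw [le_div_iff₀ hGx]
      have h2 : (1 - ε / 2) * G x ≤ G (x + t) := (le_div_iff₀ hGx).mp hx
      rcases le_or_gt (1 - ε / 2) 0 with hc0 | hc0
      · have h3 : (1 - ε) * G x ≤ 0 :=
          mul_nonpos_of_nonpos_of_nonneg (by linarith) (hGnn x)
        linarith [hHnn x]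
      · nlinarith [mul_le_mul_of_nonneg_right h2 (hcnn t), hct.le, hGx.le,
          mul_le_mul_of_nonneg_left hct.le (mul_nonneg hc0.le (hGnn x)), sq_nonneg ε]
  -- (iii) → (ii)
  have P2 : Tendsto (fun x => H x / G x) atTop (nhds 1) →
      ((∀ x, 0 < G x) ∧ ∀ t : ℝ, 0 < t →
        Tendsto (fun x => G (x - t) / G x) atTop (nhds 1)) := by
    intro hR
    have hGpos : ∀ x, 0 < G x := by
      intro x
      rcases lt_or_ge 0 (G x) with h | h
      · exact h
      · exfalso
        have hx0 : G x = 0 := le_antisymm h (hGnn x)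
        have hev := Filter.Tendsto.eventually_const_lt (by norm_num : (0 : ℝ) < 1) hR
        obtain ⟨y, hy1, hy2⟩ := (hev.and (eventually_ge_atTop x)).exists
        have hGy : G y = 0 := le_antisymm (hx0 ▸ hGanti hy2) (hGnn y)
        rw [hGy, div_zero] at hy1
        exact lt_irrefl _ hy1
    refine ⟨hGpos, ?_⟩
    have hmain : Tendsto (fun x => G (x + δ0) / G x) atTop (nhds 1) := by
      have hlow : Tendsto (fun x => (H x / G x - (1 - q)) / q) atTop (nhds 1) := by
        have h0 := (hR.sub_const (1 - q)).div_const q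
        rwa [show (1 - (1 - q)) / q = 1 by rw [sub_sub_cancel, div_self hqpos.ne']] at h0
      refine tendsto_of_tendsto_of_tendsto_of_le_of_le hlow tendsto_const_nhds
        (fun x => ?_) (fun x => ?_)
      · have hG := hGpos x
        rw [div_le_div_iff₀ hqpos hG]
        have h1 := hsplit x
        have h2 : H x / G x * G x = H x := div_mul_cancel₀ _ hG.ne'
        nlinarith [h1, h2]
      · exact div_le_one_of_le₀ (hGanti (by linarith)) (hGnn x)
    have hsh : Tendsto (fun x : ℝ => x - δ0) atTop atTop := by
      simpa [sub_eq_add_neg] using tendsto_atTop_add_const_right atTop (-δ0) tendsto_id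
    have h1 := hmain.comp hsh
    have h2 : Tendsto (fun x => G x / G (x - δ0)) atTop (nhds 1) :=
      h1.congr fun x => by simp only [Function.comp_apply, sub_add_cancel]
    exact aux_ext G hGanti hGpos δ0 hδ0 (hflip _ _ h2)
  -- (ii) → (i)
  have P3 : ((∀ x, 0 < G x) ∧ ∀ t : ℝ, 0 < t →
      Tendsto (fun x => G (x - t) / G x) atTop (nhds 1)) →
      ((∀ x, 0 < H x) ∧ ∀ t : ℝ, 0 < t →
        Tendsto (fun x => H (x - t) / H x) atTop (nhds 1)) := by
    intro hLG
    have hR := P1 hLG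
    obtain ⟨hGpos, hGt⟩ := hLG
    have hHpos : ∀ x, 0 < H x := by
      intro x
      obtain ⟨t, ht, hct⟩ := hc1 (1 / 2) (by norm_num)
      have h1 : G (x + t) * c t ≤ H x := by
        have h0 := hGH t (x + t)
        rwa [add_sub_cancel_right] at h0
      have h2 : 0 < G (x + t) * c t := mul_pos (hGpos _) (by linarith)
      linarith
    refine ⟨hHpos, fun t ht => ?_⟩
    have hsh : Tendsto (fun x : ℝ => x - t) atTop atTop := by
      simpa [sub_eq_add_neg] using tendsto_atTop_add_const_right atTop (-t) tendsto_id
    have hA : Tendsto (fun x => H (x - t) / G (x - t)) atTop (nhds 1) := hR.comp hsh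
    have hB := hGt t ht
    have hC : Tendsto (fun x => G x / H x) atTop (nhds 1) := hflip _ _ hR
    have hD := (hA.mul hB).mul hC
    rw [mul_one, mul_one] at hD
    refine hD.congr fun x => ?_
    have h1 := (hGpos (x - t)).ne'
    have h2 := (hGpos x).ne'
    have h3 := (hHpos x).ne'
    field_simp
  -- (i) → (iii)
  have P4 : ((∀ x, 0 < H x) ∧ ∀ t : ℝ, 0 < t →
      Tendsto (fun x => H (x - t) / H x) atTop (nhds 1)) →
      Tendsto (fun x => H x / G x) atTop (nhds 1) := by
    rintro ⟨hHpos, hHt⟩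
    have hGpos : ∀ x, 0 < G x := fun x => lt_of_lt_of_le (hHpos x) (hHG x)
    apply tendsto_one_of_eps
    · exact Eventually.of_forall fun x => div_le_one_of_le₀ (hHG x) (hGnn x)
    · intro ε hε
      set ε' := min (ε / 2) (1 / 2) with hε'def
      have hε'pos : 0 < ε' := lt_min (by linarith) (by norm_num)
      have hε'le : ε' ≤ ε / 2 := min_le_left _ _
      have hε'le2 : ε' ≤ 1 / 2 := min_le_right _ _
      obtain ⟨t, ht, hct⟩ := hc1 ε' hε'pos
      have hinv : Tendsto (fun x => H x / H (x - t)) atTop (nhds 1) := hflip _ _ (hHt t ht)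
      have hev := Filter.Tendsto.eventually_const_le (by linarith : 1 - ε' < 1) hinv
      filter_upwards [hev] with x hx
      have hGx := hGpos x
      rw [le_div_iff₀ hGx]
      have h1 : G x * c t ≤ H (x - t) := hGH t x
      have h2 : (1 - ε') * H (x - t) ≤ H x := (le_div_iff₀ (hHpos (x - t))).mp hx
      have h3 : (1 - ε') * (G x * c t) ≤ (1 - ε') * H (x - t) :=
        mul_le_mul_of_nonneg_left h1 (by linarith)
      have h4 : (1 - ε') * (G x * (1 - ε')) ≤ (1 - ε') * (G x * c t) :=
        mul_le_mul_of_nonneg_left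
          (mul_le_mul_of_nonneg_left hct.le hGx.le) (by linarith)
      have h5 : (1 - ε) * G x ≤ (1 - ε') * (G x * (1 - ε')) := by
        nlinarith [hGx.le, sq_nonneg ε']
      linarith
  exact ⟨⟨fun h => P2 (P4 h), P3⟩, ⟨P1, P2⟩⟩

/-- Tang (2004): for `X`, `Y` independent with `Y` nonnegative and not degenerate at `0`,
the distribution of `X - Y` is long-tailed iff the distribution of `X` is long-tailed iff
`P(X - Y > x) ∼ P(X > x)`. -/
theorem longtailed_shift_equiv {Ω : Type*} [MeasurableSpace Ω] (P : Measure Ω)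
    [IsProbabilityMeasure P] (X Y : Ω → ℝ)
    (hXm : Measurable X) (hYm : Measurable Y)
    (hindep : IndepFun X Y P)
    (hYpos : ∀ᵐ ω ∂P, 0 ≤ Y ω)
    (hYnd : 0 < P {ω | 0 < Y ω}) :
    (LongTailed (P.map (fun ω => X ω - Y ω)) ↔ LongTailed (P.map X)) ∧
    (LongTailed (P.map X) ↔
      Tendsto (fun x => (P {ω | x < X ω - Y ω}).toReal / (P {ω | x < X ω}).toReal)
        atTop (nhds 1)) := by
  have hXYm : Measurable fun ω => X ω - Y ω := hXm.sub hYm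
  have hfin : ∀ s : Set Ω, P s ≠ ⊤ := fun s => measure_ne_top P s
  have hmG : ∀ x, mtail (P.map X) x = (P {ω | x < X ω}).toReal := by
    intro x
    simp only [mtail]
    rw [Measure.map_apply hXm measurableSet_Ioi]
    rfl
  have hmH : ∀ x, mtail (P.map fun ω => X ω - Y ω) x = (P {ω | x < X ω - Y ω}).toReal := by
    intro x
    simp only [mtail]
    rw [Measure.map_apply hXYm measurableSet_Ioi]
    rfl
  -- independence at the level of preimages
  have hind : ∀ (s t : Set ℝ), MeasurableSet s → MeasurableSet t →
      P (X ⁻¹' s ∩ Y ⁻¹' t) = P (X ⁻¹' s) * P (Y ⁻¹' t) :=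
    fun s t hs ht => hindep.measure_inter_preimage_eq_mul s t hs ht
  -- basic monotonicity / positivity facts
  have hGanti : Antitone fun x => (P {ω | x < X ω}).toReal := by
    intro a b hab
    exact ENNReal.toReal_mono (hfin _) (measure_mono fun ω hω => lt_of_le_of_lt hab hω)
  have hGnn : ∀ x, (0 : ℝ) ≤ (P {ω | x < X ω}).toReal := fun x => ENNReal.toReal_nonneg
  have hHnn : ∀ x, (0 : ℝ) ≤ (P {ω | x < X ω - Y ω}).toReal := fun x => ENNReal.toReal_nonneg
  have hHG : ∀ x, (P {ω | x < X ω - Y ω}).toReal ≤ (P {ω | x < X ω}).toReal := by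
    intro x
    refine ENNReal.toReal_mono (hfin _) (measure_mono_ae ?_)
    filter_upwards [hYpos] with ω h0 hx
    have hx' : x < X ω - Y ω := hx
    show x < X ω
    linarith
  have hcnn : ∀ t : ℝ, (0 : ℝ) ≤ (P {ω | Y ω ≤ t}).toReal := fun t => ENNReal.toReal_nonneg
  have hcle1 : ∀ t : ℝ, (P {ω | Y ω ≤ t}).toReal ≤ 1 := by
    intro t
    simpa using ENNReal.toReal_mono (by norm_num) (prob_le_one (μ := P) (s := {ω | Y ω ≤ t}))
  have hcmono : Monotone fun t : ℝ => (P {ω | Y ω ≤ t}).toReal := by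
    intro a b hab
    exact ENNReal.toReal_mono (hfin _) (measure_mono fun ω hω => le_trans hω hab)
  -- key inequality: G x * c t ≤ H (x - t)
  have hGH : ∀ t x : ℝ, (P {ω | x < X ω}).toReal * (P {ω | Y ω ≤ t}).toReal ≤
      (P {ω | x - t < X ω - Y ω}).toReal := by
    intro t x
    have hsub : X ⁻¹' Set.Ioi x ∩ Y ⁻¹' Set.Iic t ⊆ {ω | x - t < X ω - Y ω} := by
      rintro ω ⟨h1, h2⟩
      simp only [Set.mem_preimage, Set.mem_Ioi, Set.mem_Iic] at h1 h2
      simp only [Set.mem_setOf_eq]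
      linarith
    have h1 := measure_mono (μ := P) hsub
    rw [hind _ _ measurableSet_Ioi measurableSet_Iic] at h1
    have h2 := ENNReal.toReal_mono (hfin _) h1
    rw [ENNReal.toReal_mul] at h2
    exact h2
  -- c t gets close to 1
  have hc1 : ∀ ε : ℝ, 0 < ε → ∃ t : ℝ, 0 < t ∧ 1 - ε < (P {ω | Y ω ≤ t}).toReal := by
    have hmono : Monotone fun n : ℕ => {ω | Y ω ≤ (n : ℝ)} := by
      intro a b hab ω hω
      simp only [Set.mem_setOf_eq] at *
      exact le_trans hω (Nat.cast_le.mpr hab)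
    have hun : ⋃ n : ℕ, {ω | Y ω ≤ (n : ℝ)} = Set.univ := by
      ext ω
      simp only [Set.mem_iUnion, Set.mem_setOf_eq, Set.mem_univ, iff_true]
      exact exists_nat_ge (Y ω)
    have ht := tendsto_measure_iUnion_atTop (μ := P) hmono
    rw [hun, measure_univ] at ht
    have ht' : Tendsto (fun n : ℕ => (P {ω | Y ω ≤ (n : ℝ)}).toReal) atTop (nhds 1) := by
      have h2 := (ENNReal.tendsto_toReal ENNReal.one_ne_top).comp ht
      simpa [Function.comp_def] using h2
    intro ε hε
    have hev := Filter.Tendsto.eventually_const_lt (by linarith : 1 - ε < 1) ht'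
    obtain ⟨n, hn⟩ := hev.exists
    exact ⟨(n : ℝ) + 1, by positivity, lt_of_lt_of_le hn (hcmono (by linarith))⟩
  -- Y is not degenerate at 0: find δ0 with P(Y > δ0) > 0
  have hq : ∃ δ : ℝ, 0 < δ ∧ 0 < P {ω | δ < Y ω} := by
    by_contra hcon
    push_neg at hcon
    have hnull : ∀ n : ℕ, P {ω | 1 / (n + 1 : ℝ) < Y ω} = 0 := fun n =>
      le_antisymm (hcon _ (by positivity)) (zero_le)
    have hcov : {ω | 0 < Y ω} ⊆ ⋃ n : ℕ, {ω | 1 / (n + 1 : ℝ) < Y ω} := by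
      intro ω hω
      simp only [Set.mem_setOf_eq] at hω
      obtain ⟨n, hn⟩ := exists_nat_one_div_lt hω
      exact Set.mem_iUnion.mpr ⟨n, hn⟩
    have h0 : P {ω | 0 < Y ω} = 0 :=
      le_antisymm (le_trans (measure_mono hcov) (le_of_eq (measure_iUnion_null hnull)))
        (zero_le)
    rw [h0] at hYnd
    exact lt_irrefl _ hYnd
  obtain ⟨δ0, hδ0pos, hq0⟩ := hq
  set q : ℝ := (P {ω | δ0 < Y ω}).toReal with hqdef
  have hqpos : 0 < q := ENNReal.toReal_pos hq0.ne' (hfin _)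
  have hcq : (P {ω | Y ω ≤ δ0}).toReal = 1 - q := by
    have hms : MeasurableSet {ω | Y ω ≤ δ0} := hYm measurableSet_Iic
    have h1 : P {ω | Y ω ≤ δ0} + P {ω | δ0 < Y ω} = 1 := by
      have h2 := measure_add_measure_compl (μ := P) hms
      have hcompl : {ω | Y ω ≤ δ0}ᶜ = {ω | δ0 < Y ω} := by
        ext ω
        simp [not_le]
      rwa [hcompl, measure_univ] at h2
    have h3 := congrArg ENNReal.toReal h1
    rw [ENNReal.toReal_add (hfin _) (hfin _), ENNReal.toReal_one] at h3
    rw [hqdef]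
    linarith
  -- the splitting inequality
  have hsplit : ∀ x : ℝ, (P {ω | x < X ω - Y ω}).toReal ≤
      (P {ω | x + δ0 < X ω}).toReal * q + (P {ω | x < X ω}).toReal * (1 - q) := by
    intro x
    have hae : P {ω | x < X ω - Y ω} ≤
        P ((X ⁻¹' Set.Ioi (x + δ0) ∩ Y ⁻¹' Set.Ioi δ0) ∪
          (X ⁻¹' Set.Ioi x ∩ Y ⁻¹' Set.Iic δ0)) := by
      apply measure_mono_ae
      filter_upwards [hYpos] with ω h0 hx
      have hx' : x < X ω - Y ω := hx
      rcases lt_or_ge δ0 (Y ω) with hY | hY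
      · exact Or.inl ⟨show x + δ0 < X ω by linarith, show δ0 < Y ω from hY⟩
      · exact Or.inr ⟨show x < X ω by linarith, show Y ω ≤ δ0 from hY⟩
    have h2 : P ((X ⁻¹' Set.Ioi (x + δ0) ∩ Y ⁻¹' Set.Ioi δ0) ∪
        (X ⁻¹' Set.Ioi x ∩ Y ⁻¹' Set.Iic δ0)) ≤
        P (X ⁻¹' Set.Ioi (x + δ0) ∩ Y ⁻¹' Set.Ioi δ0) +
        P (X ⁻¹' Set.Ioi x ∩ Y ⁻¹' Set.Iic δ0) := measure_union_le _ _
    have h3 : (P {ω | x < X ω - Y ω}).toReal ≤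
        (P (X ⁻¹' Set.Ioi (x + δ0) ∩ Y ⁻¹' Set.Ioi δ0)).toReal +
        (P (X ⁻¹' Set.Ioi x ∩ Y ⁻¹' Set.Iic δ0)).toReal := by
      have h4 := ENNReal.toReal_mono (ENNReal.add_ne_top.mpr ⟨hfin _, hfin _⟩)
        (le_trans hae h2)
      rwa [ENNReal.toReal_add (hfin _) (hfin _)] at h4
    have hA' : (P (X ⁻¹' Set.Ioi (x + δ0) ∩ Y ⁻¹' Set.Ioi δ0)).toReal =
        (P {ω | x + δ0 < X ω}).toReal * q := by
      rw [hind _ _ measurableSet_Ioi measurableSet_Ioi, ENNReal.toReal_mul]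
      rfl
    have hB' : (P (X ⁻¹' Set.Ioi x ∩ Y ⁻¹' Set.Iic δ0)).toReal =
        (P {ω | x < X ω}).toReal * (1 - q) := by
      rw [hind _ _ measurableSet_Ioi measurableSet_Iic, ENNReal.toReal_mul]
      have h5 : (P (Y ⁻¹' Set.Iic δ0)).toReal = 1 - q := hcq
      rw [h5]
      rfl
    linarith
  have hcore := core (fun x => (P {ω | x < X ω}).toReal)
    (fun x => (P {ω | x < X ω - Y ω}).toReal)
    (fun t => (P {ω | Y ω ≤ t}).toReal) δ0 q
    hGanti hGnn hHnn hHG hcnn hcle1 hGH hc1 hδ0pos hqpos hsplit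
  constructor
  · simp only [LongTailed, hmH, hmG]
    exact hcore.1
  · simp only [LongTailed, hmG]
    exact hcore.2
end
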